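/- Let E be a complete real inner product space and let f : E → ℝ be 1-Lipschitz. Suppose x, y ∈ E with x ≠ y satisfy f(x) - f(y) = ‖x - y‖, and let z = x + α • (y - x) for some α ∈ [0, 1]. If f is differentiable at z, then the gradient of f at z equals the unit vector ‖x - y‖⁻¹ • (x - y). -/

import Mathlib

/-- Along a transport ray of a 1-Lipschitz function on a real Hilbert space,
at any differentiability point of the segment the gradient is the unit vector
pointing along the ray. -/
theorem otnn_gradient_on_ray {E : Type*} [NormedAddCommGroup E] [InnerProductSpace ℝ E]
    [CompleteSpace E]
    (f : E → ℝ) (hf : LipschitzWith 1 f) (x y : E) (hne : x ≠ y)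
    (hxy : f x - f y = ‖x - y‖) (α : ℝ) (hα : α ∈ Set.Icc (0 : ℝ) 1)
    (hdiff : DifferentiableAt ℝ f (x + α • (y - x))) :
    gradient f (x + α • (y - x)) = ‖x - y‖⁻¹ • (x - y) := by
  set z := x + α • (y - x) with hz
  set g := gradient f z with hg
  have hvne : x - y ≠ 0 := sub_ne_zero.2 hne
  have hvpos : (0:ℝ) < ‖x - y‖ := norm_pos_iff.2 hvne
  have hlip : ∀ a b : E, f a - f b ≤ ‖a - b‖ := by
    intro a b
    have := hf.dist_le_mul a b
    rw [Real.dist_eq, dist_eq_norm, NNReal.coe_one, one_mul] at this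
    exact (le_abs_self _).trans this
  -- f is affine along the segment
  have haff : ∀ t ∈ Set.Icc (0:ℝ) 1, f (x + t • (y - x)) = f x - t * ‖x - y‖ := by
    intro t ht
    have h1 : f x - f (x + t • (y - x)) ≤ t * ‖x - y‖ := by
      calc f x - f (x + t • (y - x)) ≤ ‖x - (x + t • (y - x))‖ := hlip _ _
        _ = ‖t • (x - y)‖ := by congr 1; module
        _ = t * ‖x - y‖ := by rw [norm_smul, Real.norm_eq_abs, abs_of_nonneg ht.1]
    have h2 : f (x + t • (y - x)) - f y ≤ (1 - t) * ‖x - y‖ := by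
      calc f (x + t • (y - x)) - f y ≤ ‖(x + t • (y - x)) - y‖ := hlip _ _
        _ = ‖(1 - t) • (x - y)‖ := by congr 1; module
        _ = (1 - t) * ‖x - y‖ := by
            rw [norm_smul, Real.norm_eq_abs, abs_of_nonneg (by linarith [ht.2])]
    have hsum : (f x - f (x + t • (y - x))) + (f (x + t • (y - x)) - f y) = ‖x - y‖ := by
      linarith [hxy]
    nlinarith
  -- derivative along the segment via chain rule
  have hcurve : HasDerivAt (fun t : ℝ => x + t • (y - x)) (y - x) α := by
    simpa using ((hasDerivAt_id α).smul_const (y - x)).const_add x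
  have hcomp : HasDerivAt (fun t : ℝ => f (x + t • (y - x)))
      (inner ℝ g (y - x) : ℝ) α := by
    have hgrad := hdiff.hasGradientAt
    have hF : HasFDerivAt f (InnerProductSpace.toDual ℝ E g) z := hgrad.hasFDerivAt
    have h := hF.comp_hasDerivAt α hcurve
    simp at h
    exact h
  -- derivative within the segment from the affine formula
  have haffd : HasDerivWithinAt (fun t : ℝ => f (x + t • (y - x))) (-‖x - y‖)
      (Set.Icc (0:ℝ) 1) α := by
    have h0 : HasDerivWithinAt (fun t : ℝ => f x - t * ‖x - y‖) (-‖x - y‖)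
        (Set.Icc (0:ℝ) 1) α := by
      simpa using (((hasDerivAt_id α).mul_const ‖x - y‖).const_sub (f x)).hasDerivWithinAt
    exact h0.congr haff (haff α hα)
  have hud : UniqueDiffWithinAt ℝ (Set.Icc (0:ℝ) 1) α :=
    (uniqueDiffOn_Icc one_pos) α hα
  have hderiv_eq : (inner ℝ g (y - x) : ℝ) = -‖x - y‖ := by
    have h1 := (hcomp.hasDerivWithinAt (s := Set.Icc (0:ℝ) 1)).derivWithin hud
    have h2 := haffd.derivWithin hud
    rw [h1] at h2; exact h2
  have hinner : (inner ℝ g (x - y) : ℝ) = ‖x - y‖ := by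
    have : (inner ℝ g (y - x) : ℝ) = - inner ℝ g (x - y) := by
      rw [← inner_neg_right]; congr 1; abel
    linarith [hderiv_eq, this.symm ▸ hderiv_eq]
  -- norm bound on the gradient
  have hgle : ‖g‖ ≤ 1 := by
    have hF : HasFDerivAt f (InnerProductSpace.toDual ℝ E g) z :=
      hdiff.hasGradientAt.hasFDerivAt
    have := hF.le_of_lipschitz hf
    rwa [(InnerProductSpace.toDual ℝ E).norm_map, NNReal.coe_one] at this
  have hgge : (1:ℝ) ≤ ‖g‖ := by
    have hcs : (inner ℝ g (x - y) : ℝ) ≤ ‖g‖ * ‖x - y‖ := real_inner_le_norm g (x - y)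
    rw [hinner] at hcs
    nlinarith
  have hgnorm : ‖g‖ = 1 := le_antisymm hgle hgge
  have heq : ‖x - y‖ • g = ‖g‖ • (x - y) := by
    rw [← inner_eq_norm_mul_iff_real, hinner, hgnorm, one_mul]
  rw [hgnorm, one_smul] at heq
  calc g = ‖x - y‖⁻¹ • (‖x - y‖ • g) := by
        rw [smul_smul, inv_mul_cancel₀ hvpos.ne', one_smul]
    _ = ‖x - y‖⁻¹ • (x - y) := by rw [heq]
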